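/- Let X be a compact metric space, G a group acting minimally on X by homeomorphisms, H a real separable Hilbert space, and (Ψ, ρ) a continuous cocycle of affine isometries of H over this action. Let μ be a Borel probability measure on X that is quasi-invariant under the action (for each g ∈ G the pushforward of μ is equivalent to μ). If ρ is a coboundary in the measurable bounded category — i.e., there exists a measurable essentially bounded φ : X → H such that for every g ∈ G, ρ(g,x) = φ(g·x) − Ψ(g,x)(φ(x)) for μ-almost every x ∈ X — then ρ is a coboundary in the continuous category: there exists a continuous φ' : X → H such that ρ(g,x) = φ'(g·x) − Ψ(g,x)(φ'(x)) for all g ∈ G and all x ∈ X. -/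

import Mathlib

open MeasureTheory

section Circ
set_option linter.unusedSectionVars false

variable {H : Type*} [NormedAddCommGroup H] [InnerProductSpace ℝ H] [CompleteSpace H]

/-- The (possibly infinite) radius function: supremum of distances from `c` to points of `T`. -/
noncomputable def sRad (T : Set H) (c : H) : ℝ := ⨆ t : T, dist c (t : H)

/-- `c` is a circumcenter of `T`: it minimizes `sRad T`. -/
def IsCirc (T : Set H) (c : H) : Prop := ∀ c', sRad T c ≤ sRad T c'

variable {T : Set H} {K : ℝ}

lemma bddAbove_dist (hK : ∀ t ∈ T, ‖t‖ ≤ K) (c : H) :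
    BddAbove (Set.range fun t : T => dist c (t : H)) := by
  refine ⟨‖c‖ + K, ?_⟩
  rintro y ⟨t, rfl⟩
  calc dist c (t : H) ≤ ‖c‖ + ‖(t : H)‖ := by
        rw [dist_eq_norm]; exact norm_sub_le _ _
  _ ≤ ‖c‖ + K := by linarith [hK t t.2]

lemma dist_le_sRad (hK : ∀ t ∈ T, ‖t‖ ≤ K) {c t : H} (ht : t ∈ T) : dist c t ≤ sRad T c :=
  le_ciSup (bddAbove_dist hK c) (⟨t, ht⟩ : T)

lemma sRad_le (hne : T.Nonempty) {c : H} {a : ℝ} (h : ∀ t ∈ T, dist c t ≤ a) :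
    sRad T c ≤ a := by
  haveI := hne.to_subtype
  exact ciSup_le fun t => h t t.2

lemma sRad_nonneg (hne : T.Nonempty) (hK : ∀ t ∈ T, ‖t‖ ≤ K) (c : H) : 0 ≤ sRad T c :=
  dist_nonneg.trans (dist_le_sRad hK hne.choose_spec)

lemma dist_midpoint_sq (c₁ c₂ t : H) :
    dist (midpoint ℝ c₁ c₂) t ^ 2
      = dist c₁ t ^ 2 / 2 + dist c₂ t ^ 2 / 2 - dist c₁ c₂ ^ 2 / 4 := by
  have hpar := parallelogram_law_with_norm ℝ (c₁ - t) (c₂ - t)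
  have h2 : (c₁ - t) - (c₂ - t) = c₁ - c₂ := by abel
  have hm : midpoint ℝ c₁ c₂ - t = (2:ℝ)⁻¹ • ((c₁ - t) + (c₂ - t)) := by
    rw [midpoint_eq_smul_add, invOf_eq_inv]
    module
  have h1 : dist (midpoint ℝ c₁ c₂) t = (2:ℝ)⁻¹ * ‖(c₁ - t) + (c₂ - t)‖ := by
    rw [dist_eq_norm, hm, norm_smul]
    simp
  rw [dist_eq_norm c₁ t, dist_eq_norm c₂ t, dist_eq_norm c₁ c₂, h1]
  rw [h2] at hpar
  nlinarith [hpar]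

lemma sRad_midpoint_sq (hne : T.Nonempty) (hK : ∀ t ∈ T, ‖t‖ ≤ K) (c₁ c₂ : H) :
    sRad T (midpoint ℝ c₁ c₂) ^ 2
      ≤ sRad T c₁ ^ 2 / 2 + sRad T c₂ ^ 2 / 2 - dist c₁ c₂ ^ 2 / 4 := by
  set B := sRad T c₁ ^ 2 / 2 + sRad T c₂ ^ 2 / 2 - dist c₁ c₂ ^ 2 / 4 with hB
  have hBt : ∀ t ∈ T, dist (midpoint ℝ c₁ c₂) t ^ 2 ≤ B := by
    intro t ht
    rw [dist_midpoint_sq]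
    have h₁ : dist c₁ t ≤ sRad T c₁ := dist_le_sRad hK ht
    have h₂ : dist c₂ t ≤ sRad T c₂ := dist_le_sRad hK ht
    have h₃ : (0:ℝ) ≤ dist c₁ t := dist_nonneg
    have h₄ : (0:ℝ) ≤ dist c₂ t := dist_nonneg
    have h₅ : dist c₁ t ^ 2 ≤ sRad T c₁ ^ 2 := by nlinarith
    have h₆ : dist c₂ t ^ 2 ≤ sRad T c₂ ^ 2 := by nlinarith
    rw [hB]; linarith
  obtain ⟨t₀, ht₀⟩ := hne
  have hB0 : 0 ≤ B := le_trans (sq_nonneg _) (hBt t₀ ht₀)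
  have hle : sRad T (midpoint ℝ c₁ c₂) ≤ Real.sqrt B := by
    apply sRad_le ⟨t₀, ht₀⟩
    intro t ht
    have := hBt t ht
    nlinarith [Real.sq_sqrt hB0, Real.sqrt_nonneg B,
      dist_nonneg (x := midpoint ℝ c₁ c₂) (y := t)]
  have h0 : 0 ≤ sRad T (midpoint ℝ c₁ c₂) := sRad_nonneg ⟨t₀, ht₀⟩ hK _
  calc sRad T (midpoint ℝ c₁ c₂) ^ 2 ≤ Real.sqrt B ^ 2 := by nlinarith
  _ = B := Real.sq_sqrt hB0

lemma isCirc_le_sq (hne : T.Nonempty) (hK : ∀ t ∈ T, ‖t‖ ≤ K) {c : H} (hc : IsCirc T c)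
    (c' : H) : dist c c' ^ 2 ≤ 2 * sRad T c' ^ 2 - 2 * sRad T c ^ 2 := by
  have h1 := hc (midpoint ℝ c c')
  have h2 := sRad_midpoint_sq hne hK c c'
  have h0 := sRad_nonneg hne hK c
  have h3 : sRad T c ^ 2 ≤ sRad T (midpoint ℝ c c') ^ 2 := by nlinarith
  linarith

lemma isCirc_unique (hne : T.Nonempty) (hK : ∀ t ∈ T, ‖t‖ ≤ K) {c c' : H}
    (hc : IsCirc T c) (hc' : IsCirc T c') : c = c' := by
  have h1 := isCirc_le_sq hne hK hc c'
  have h2 : sRad T c' ≤ sRad T c := hc' c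
  have h3 : sRad T c ≤ sRad T c' := hc c'
  have h4 : sRad T c' = sRad T c := le_antisymm h2 h3
  rw [h4] at h1
  have h5 : dist c c' ^ 2 = 0 := le_antisymm (by linarith) (sq_nonneg _)
  have h6 : dist c c' = 0 := by
    have := sq_nonneg (dist c c')
    nlinarith [dist_nonneg (x := c) (y := c')]
  exact dist_eq_zero.mp h6

lemma sRad_le_add_dist (hne : T.Nonempty) (hK : ∀ t ∈ T, ‖t‖ ≤ K) (c c' : H) :
    sRad T c ≤ sRad T c' + dist c c' := by
  apply sRad_le hne
  intro t ht
  calc dist c t ≤ dist c c' + dist c' t := dist_triangle _ _ _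
  _ ≤ dist c c' + sRad T c' := by linarith [dist_le_sRad hK ht (c := c')]
  _ = sRad T c' + dist c c' := by ring

lemma sRad_mono {S : Set H} (hSne : S.Nonempty) (hST : S ⊆ T)
    (hK : ∀ t ∈ T, ‖t‖ ≤ K) (c : H) : sRad S c ≤ sRad T c :=
  sRad_le hSne fun t ht => dist_le_sRad hK (hST ht)

lemma sRad_le_near {S : Set H} (hSne : S.Nonempty) (hK : ∀ t ∈ T, ‖t‖ ≤ K) {d : ℝ}
    (h : ∀ s ∈ S, ∃ t ∈ T, dist s t ≤ d) (c : H) : sRad S c ≤ sRad T c + d := by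
  apply sRad_le hSne
  intro s hs
  obtain ⟨t, ht, hst⟩ := h s hs
  calc dist c s ≤ dist c t + dist t s := dist_triangle _ _ _
  _ ≤ sRad T c + d := add_le_add (dist_le_sRad hK ht) (by rwa [dist_comm])

lemma sRad_image {A : H → H} (hA : ∀ a b, dist (A a) (A b) = dist a b)
    (hne : T.Nonempty) (hK : ∀ t ∈ T, ‖t‖ ≤ K) (c : H) :
    sRad (A '' T) (A c) = sRad T c := by
  have hK' : ∀ v ∈ A '' T, ‖v‖ ≤ K + ‖A 0‖ := by
    rintro v ⟨t, ht, rfl⟩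
    calc ‖A t‖ = dist (A t) 0 := (dist_zero_right _).symm
    _ ≤ dist (A t) (A 0) + dist (A 0) 0 := dist_triangle _ _ _
    _ = dist t 0 + dist (A 0) 0 := by rw [hA]
    _ = ‖t‖ + ‖A 0‖ := by rw [dist_zero_right, dist_zero_right]
    _ ≤ K + ‖A 0‖ := add_le_add_left (hK t ht) _
  apply le_antisymm
  · apply sRad_le (hne.image A)
    rintro v ⟨t, ht, rfl⟩
    rw [hA]
    exact dist_le_sRad hK ht
  · apply sRad_le hne
    intro t ht
    rw [← hA c t]
    exact dist_le_sRad hK' ⟨t, ht, rfl⟩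

lemma isCirc_image {A : H → H} (hA : ∀ a b, dist (A a) (A b) = dist a b)
    (hsurj : Function.Surjective A) (hne : T.Nonempty) (hK : ∀ t ∈ T, ‖t‖ ≤ K) {c : H}
    (hc : IsCirc T c) : IsCirc (A '' T) (A c) := by
  intro c''
  obtain ⟨c₀, rfl⟩ := hsurj c''
  rw [sRad_image hA hne hK, sRad_image hA hne hK]
  exact hc c₀

lemma exists_isCirc (hne : T.Nonempty) (hK : ∀ t ∈ T, ‖t‖ ≤ K) : ∃ c, IsCirc T c := by
  set r₀ := ⨅ c : H, sRad T c with hr₀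
  have hbdd : BddBelow (Set.range fun c : H => sRad T c) :=
    ⟨0, by rintro y ⟨c, rfl⟩; exact sRad_nonneg hne hK c⟩
  have hr₀le : ∀ c, r₀ ≤ sRad T c := fun c => ciInf_le hbdd c
  have hr₀0 : 0 ≤ r₀ := le_ciInf fun c => sRad_nonneg hne hK c
  have hsel : ∀ n : ℕ, ∃ c, sRad T c < r₀ + 1 / (n + 1) := by
    intro n
    apply exists_lt_of_ciInf_lt
    have h : (0:ℝ) < 1 / (n + 1) := by positivity
    linarith
  choose u hu using hsel
  have hRnn : ∀ n, 0 ≤ sRad T (u n) := fun n => sRad_nonneg hne hK _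
  have hdist : ∀ n m : ℕ, dist (u n) (u m) ^ 2
      ≤ 2 * sRad T (u n) ^ 2 + 2 * sRad T (u m) ^ 2 - 4 * r₀ ^ 2 := by
    intro n m
    have h2 := sRad_midpoint_sq hne hK (u n) (u m)
    have h1 : r₀ ≤ sRad T (midpoint ℝ (u n) (u m)) := hr₀le _
    have h3 : r₀ ^ 2 ≤ sRad T (midpoint ℝ (u n) (u m)) ^ 2 := by nlinarith
    linarith
  have hb : ∀ N n : ℕ, N ≤ n → sRad T (u n) ≤ r₀ + 1 / (N + 1) := by
    intro N n hn
    have h1 : ((N:ℝ) + 1) ≤ (n:ℝ) + 1 := by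
      have := (Nat.cast_le (α := ℝ)).mpr hn; linarith
    have h2 : (1:ℝ) / (n + 1) ≤ 1 / (N + 1) :=
      one_div_le_one_div_of_le (by positivity) h1
    linarith [hu n]
  have hcauchy : CauchySeq u := by
    refine cauchySeq_of_le_tendsto_0
      (fun N : ℕ => Real.sqrt (4 * (r₀ + 1/(N+1))^2 - 4 * r₀^2)) ?_ ?_
    · intro n m N hn hm
      have h1 := hb N n hn
      have h2 := hb N m hm
      have hQ : dist (u n) (u m) ^ 2 ≤ 4 * (r₀ + 1/(N+1))^2 - 4 * r₀^2 := by
        have := hdist n m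
        have hs1 : sRad T (u n) ^ 2 ≤ (r₀ + 1/(N+1))^2 := by nlinarith [hRnn n]
        have hs2 : sRad T (u m) ^ 2 ≤ (r₀ + 1/(N+1))^2 := by nlinarith [hRnn m]
        linarith
      have hQ0 : (0:ℝ) ≤ 4 * (r₀ + 1/(N+1))^2 - 4 * r₀^2 := le_trans (sq_nonneg _) hQ
      nlinarith [Real.sq_sqrt hQ0, Real.sqrt_nonneg (4 * (r₀ + 1/(N+1))^2 - 4 * r₀^2),
        dist_nonneg (x := u n) (y := u m)]
    · have h1 : Filter.Tendsto (fun N : ℕ => (1:ℝ)/(N+1)) Filter.atTop (nhds 0) :=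
        tendsto_one_div_add_atTop_nhds_zero_nat
      have h2 : Filter.Tendsto (fun N : ℕ => 4 * (r₀ + 1/(N+1))^2 - 4 * r₀^2)
          Filter.atTop (nhds 0) := by
        have h3 : Filter.Tendsto (fun N : ℕ => r₀ + 1/(N+1)) Filter.atTop (nhds r₀) := by
          simpa using (tendsto_const_nhds (x := r₀)).add h1
        have h4 := ((h3.pow 2).const_mul 4).sub (tendsto_const_nhds (x := 4 * r₀ ^ 2))
        simpa using h4
      have h5 := (Real.continuous_sqrt.tendsto 0).comp h2
      simpa [Function.comp_def] using h5
  obtain ⟨c, hc⟩ := cauchySeq_tendsto_of_complete hcauchy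
  refine ⟨c, ?_⟩
  have hle : sRad T c ≤ r₀ := by
    have hd : Filter.Tendsto (fun n => dist c (u n)) Filter.atTop (nhds 0) := by
      have := hc.dist (tendsto_const_nhds (x := c))
      simpa [dist_comm] using this
    have hv : Filter.Tendsto (fun n : ℕ => r₀ + 1/(n+1) + dist c (u n))
        Filter.atTop (nhds r₀) := by
      have h1 : Filter.Tendsto (fun N : ℕ => (1:ℝ)/(N+1)) Filter.atTop (nhds 0) :=
        tendsto_one_div_add_atTop_nhds_zero_nat
      simpa using ((tendsto_const_nhds (x := r₀)).add h1).add hd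
    refine ge_of_tendsto hv (Filter.Eventually.of_forall fun n => ?_)
    have h1 := sRad_le_add_dist hne hK c (u n)
    have h2 := hu n
    linarith
  intro c'
  exact hle.trans (hr₀le c')

lemma exists_finset_isCirc {ι : Type*} [Nonempty ι] [TopologicalSpace.SeparableSpace H]
    (f : ι → H) (hK : ∀ i, ‖f i‖ ≤ K) {c : H} (hc : IsCirc (Set.range f) c)
    {ε : ℝ} (hε : 0 < ε) :
    ∃ F : Finset ι, F.Nonempty ∧
      ∀ c₀, IsCirc (f '' ↑F) c₀ → sRad (Set.range f) c - ε < sRad (f '' ↑F) c₀ := by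
  classical
  by_contra hcon
  push_neg at hcon
  have hKr : ∀ t ∈ Set.range f, ‖t‖ ≤ K := by rintro t ⟨i, rfl⟩; exact hK i
  haveI : SecondCountableTopology H := UniformSpace.secondCountable_of_separable H
  haveI hne' : Nonempty ↥(Set.range f) := (Set.range_nonempty f).to_subtype
  set u' : ℕ → ↥(Set.range f) := TopologicalSpace.denseSeq ↥(Set.range f) with hu'
  have hu'dense : DenseRange u' := TopologicalSpace.denseRange_denseSeq ↥(Set.range f)
  have hidx : ∀ n, ∃ i, f i = (u' n : H) := fun n => (u' n).2
  choose idx hidx using hidx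
  set Fn : ℕ → Finset ι := fun n => (Finset.range (n+1)).image idx with hFn
  have hFnne : ∀ n, (Fn n).Nonempty :=
    fun n => ⟨idx 0, Finset.mem_image.mpr ⟨0, Finset.mem_range.mpr (by omega), rfl⟩⟩
  set V : ℕ → Set H := fun n => f '' ↑(Fn n) with hV
  have hVsub : ∀ n, V n ⊆ Set.range f := fun n => Set.image_subset_range f _
  have hVK : ∀ n, ∀ v ∈ V n, ‖v‖ ≤ K := by rintro n v ⟨i, _, rfl⟩; exact hK i
  have hVne : ∀ n, (V n).Nonempty := fun n => (Finset.coe_nonempty.mpr (hFnne n)).image f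
  have hmem : ∀ k n, k ≤ n → (u' k : H) ∈ V n := by
    intro k n hk
    exact ⟨idx k, Finset.mem_coe.mpr (Finset.mem_image.mpr
      ⟨k, Finset.mem_range.mpr (by omega), rfl⟩), hidx k⟩
  have hcent : ∀ n, ∃ c₀, IsCirc (V n) c₀ ∧ sRad (V n) c₀ ≤ sRad (Set.range f) c - ε := by
    intro n
    obtain ⟨c₀, hc₀, hle⟩ := hcon (Fn n) (hFnne n)
    exact ⟨c₀, hc₀, hle⟩
  choose cc hccirc hccle using hcent
  set s : ℕ → ℝ := fun n => sRad (V n) (cc n) with hs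
  have hs0 : ∀ n, 0 ≤ s n := fun n => sRad_nonneg (hVne n) (hVK n) _
  have hVmono : ∀ n m, n ≤ m → V n ⊆ V m := by
    intro n m h
    apply Set.image_mono
    exact_mod_cast Finset.image_subset_image (Finset.range_subset_range.mpr (by omega))
  have hsmono : Monotone s := by
    intro n m hnm
    calc s n ≤ sRad (V n) (cc m) := hccirc n _
    _ ≤ sRad (V m) (cc m) := sRad_mono (hVne n) (hVmono n m hnm) (hVK m) _
  have hsbd : ∀ n, s n ≤ sRad (Set.range f) c - ε := hccle
  have hbdds : BddAbove (Set.range s) := ⟨sRad (Set.range f) c - ε, by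
    rintro y ⟨n, rfl⟩; exact hsbd n⟩
  set sl := ⨆ n, s n with hsl
  have hsle : ∀ n, s n ≤ sl := fun n => le_ciSup hbdds n
  have hsl_le : sl ≤ sRad (Set.range f) c - ε := ciSup_le hsbd
  have hstend : Filter.Tendsto s Filter.atTop (nhds sl) := tendsto_atTop_ciSup hsmono hbdds
  have hkey : ∀ n m, n ≤ m → dist (cc n) (cc m) ^ 2 ≤ 2 * sl ^ 2 - 2 * s n ^ 2 := by
    intro n m hnm
    have h1 := isCirc_le_sq (hVne n) (hVK n) (hccirc n) (cc m)
    have h2 : sRad (V n) (cc m) ≤ sl :=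
      le_trans (sRad_mono (hVne n) (hVmono n m hnm) (hVK m) _) (hsle m)
    have h3 : 0 ≤ sRad (V n) (cc m) := sRad_nonneg (hVne n) (hVK n) _
    nlinarith
  have hcauchy : CauchySeq cc := by
    refine cauchySeq_of_le_tendsto_0
      (fun N : ℕ => Real.sqrt (2 * sl ^ 2 - 2 * s N ^ 2)) ?_ ?_
    · intro n m N hn hm
      have hQ : dist (cc n) (cc m) ^ 2 ≤ 2 * sl ^ 2 - 2 * s N ^ 2 := by
        rcases le_total n m with h | h
        · have := hkey n m h
          have h2 : s N ≤ s n := hsmono hn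
          nlinarith [hs0 N, hs0 n]
        · have := hkey m n h
          have h2 : s N ≤ s m := hsmono hm
          rw [dist_comm]
          nlinarith [hs0 N, hs0 m]
      have hQ0 : (0:ℝ) ≤ 2 * sl ^ 2 - 2 * s N ^ 2 := le_trans (sq_nonneg _) hQ
      nlinarith [Real.sq_sqrt hQ0, Real.sqrt_nonneg (2 * sl ^ 2 - 2 * s N ^ 2),
        dist_nonneg (x := cc n) (y := cc m)]
    · have h2 : Filter.Tendsto (fun N : ℕ => 2 * sl ^ 2 - 2 * s N ^ 2)
          Filter.atTop (nhds 0) := by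
        have h4 := (tendsto_const_nhds (x := 2 * sl ^ 2)).sub ((hstend.pow 2).const_mul 2)
        simpa using h4
      have h5 := (Real.continuous_sqrt.tendsto 0).comp h2
      simpa [Function.comp_def] using h5
  obtain ⟨cL, hcL⟩ := cauchySeq_tendsto_of_complete hcauchy
  have hdk : ∀ k, dist cL (u' k : H) ≤ sl := by
    intro k
    have hten : Filter.Tendsto (fun n => dist (cc n) (u' k : H)) Filter.atTop
        (nhds (dist cL (u' k : H))) := hcL.dist (tendsto_const_nhds (x := (u' k : H)))
    refine le_of_tendsto hten (Filter.eventually_atTop.mpr ⟨k, fun n hn => ?_⟩)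
    calc dist (cc n) (u' k : H) ≤ sRad (V n) (cc n) :=
          dist_le_sRad (hVK n) (hmem k n hn)
    _ ≤ sl := hsle n
  have hdt : ∀ t ∈ Set.range f, dist cL t ≤ sl := by
    intro t ht
    refine le_of_forall_pos_le_add fun δ hδ => ?_
    have hcl : (⟨t, ht⟩ : ↥(Set.range f)) ∈ closure (Set.range u') := hu'dense _
    obtain ⟨b, ⟨k, rfl⟩, hb⟩ := Metric.mem_closure_iff.mp hcl δ hδ
    have hbd : dist t (u' k : H) < δ := hb
    calc dist cL t ≤ dist cL (u' k : H) + dist (u' k : H) t := dist_triangle _ _ _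
    _ ≤ sl + δ := add_le_add (hdk k) (by rw [dist_comm] at hbd; linarith)
  have hfin : sRad (Set.range f) c ≤ sl :=
    le_trans (hc cL) (sRad_le (Set.range_nonempty f) hdt)
  linarith

end Circ

set_option maxHeartbeats 2000000 in
/-- **Corollary to Theorem C**: over a minimal group action, if the translation part of a
continuous cocycle of affine isometries is a coboundary in the measurable bounded category
(w.r.t. a quasi-invariant probability measure), then it is a coboundary in the continuous
category. -/
theorem measurable_coboundary_implies_continuous_coboundary
    {X : Type*} [MetricSpace X] [CompactSpace X] [MeasurableSpace X] [BorelSpace X]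
    {G : Type*} [Group G]
    {H : Type*} [NormedAddCommGroup H] [InnerProductSpace ℝ H] [CompleteSpace H]
    [TopologicalSpace.SeparableSpace H] [MeasurableSpace H] [BorelSpace H]
    (act : G → X → X)
    (hact_one : ∀ x, act 1 x = x)
    (hact_mul : ∀ g h x, act (g * h) x = act g (act h x))
    (hact_cont : ∀ g, Continuous (act g))
    (hmin : ∀ x, Dense (Set.range fun g => act g x))
    (Ψ : G → X → (H ≃ₗᵢ[ℝ] H)) (ρ : G → X → H)
    (hΨ_cont : ∀ g, Continuous fun x =>
      ((Ψ g x).toLinearIsometry.toContinuousLinearMap : H →L[ℝ] H))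
    (hρ_cont : ∀ g, Continuous fun x => ρ g x)
    (hΨ_coc : ∀ g h x v, Ψ (g * h) x v = Ψ g (act h x) (Ψ h x v))
    (hρ_coc : ∀ g h x, ρ (g * h) x = ρ g (act h x) + Ψ g (act h x) (ρ h x))
    (μ : Measure X) [IsProbabilityMeasure μ]
    (hquasi : ∀ g, μ.map (act g) ≪ μ ∧ μ ≪ μ.map (act g))
    (φ : X → H) (hφ_meas : Measurable φ)
    (hφ_bdd : ∃ C : ℝ, ∀ᵐ x ∂μ, ‖φ x‖ ≤ C)
    (hcobdd : ∀ g, ∀ᵐ x ∂μ, ρ g x = φ (act g x) - Ψ g x (φ x)) :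
    ∃ φ' : X → H, Continuous φ' ∧ ∀ g x, ρ g x = φ' (act g x) - Ψ g x (φ' x) := by
  classical
  haveI : Nonempty G := ⟨1⟩
  obtain ⟨C, hC⟩ := hφ_bdd
  -- Step A: μ has full support (via minimality + quasi-invariance + compactness)
  have hfull : ∀ E : Set X, IsClosed E → μ Eᶜ = 0 → ∀ x, x ∈ E := by
    intro E hE hEc x
    by_contra hx
    have hcov : ∀ y : X, ∃ g : G, act g y ∈ Eᶜ := by
      intro y
      obtain ⟨z, hz1, hz2⟩ := (hmin y).inter_open_nonempty Eᶜ hE.isOpen_compl ⟨x, hx⟩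
      obtain ⟨g, rfl⟩ := hz2
      exact ⟨g, hz1⟩
    have hcov2 : Set.univ ⊆ ⋃ g : G, (act g) ⁻¹' Eᶜ := by
      intro y _
      obtain ⟨g, hg⟩ := hcov y
      exact Set.mem_iUnion.mpr ⟨g, hg⟩
    obtain ⟨F, hF⟩ := isCompact_univ.elim_finite_subcover (fun g : G => (act g) ⁻¹' Eᶜ)
      (fun g => hE.isOpen_compl.preimage (hact_cont g)) hcov2
    have hnull : ∀ g : G, μ ((act g) ⁻¹' Eᶜ) = 0 := by
      intro g
      have hm : μ.map (act g) Eᶜ = 0 := (hquasi g).1 hEc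
      rwa [Measure.map_apply (hact_cont g).measurable hE.isOpen_compl.measurableSet] at hm
    have hz : μ Set.univ = 0 := by
      refine measure_mono_null hF ?_
      exact (measure_biUnion_null_iff F.countable_toSet).mpr fun g _ => hnull g
    rw [measure_univ] at hz
    exact one_ne_zero hz
  -- Step B: uniform bound on the cocycle
  have hboundae : ∀ g : G, ∀ᵐ z ∂μ, ‖φ (act g z)‖ ≤ C := by
    intro g
    have h1 : μ {y : X | ¬ ‖φ y‖ ≤ C} = 0 := ae_iff.mp hC
    have hmeasN : MeasurableSet {y : X | ¬ ‖φ y‖ ≤ C} := by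
      simp only [not_le]
      exact measurableSet_lt measurable_const hφ_meas.norm
    have h2 : μ ((act g) ⁻¹' {y : X | ¬ ‖φ y‖ ≤ C}) = 0 := by
      rw [← Measure.map_apply (hact_cont g).measurable hmeasN]
      exact (hquasi g).1 h1
    rw [ae_iff]
    exact h2
  have hbnd : ∀ (g : G) (z : X), ‖ρ g z‖ ≤ 2 * C := by
    intro g
    have hae : ∀ᵐ z ∂μ, ‖ρ g z‖ ≤ 2 * C := by
      filter_upwards [hC, hboundae g, hcobdd g] with z h1 h2 h3
      rw [h3]
      calc ‖φ (act g z) - Ψ g z (φ z)‖ ≤ ‖φ (act g z)‖ + ‖Ψ g z (φ z)‖ := norm_sub_le _ _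
      _ = ‖φ (act g z)‖ + ‖φ z‖ := by rw [(Ψ g z).norm_map]
      _ ≤ 2 * C := by linarith
    have hclosed : IsClosed {z : X | ‖ρ g z‖ ≤ 2 * C} :=
      isClosed_le (hρ_cont g).norm continuous_const
    have hcompl : μ {z : X | ‖ρ g z‖ ≤ 2 * C}ᶜ = 0 := by
      rw [Set.compl_setOf]
      exact ae_iff.mp hae
    exact hfull _ hclosed hcompl
  -- Cocycle algebra
  have hρ_one : ∀ x, ρ 1 x = 0 := by
    intro x
    have h := hρ_coc 1 1 x
    rw [one_mul, hact_one] at h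
    have h2 : Ψ 1 x (ρ 1 x) = 0 := (left_eq_add.mp h)
    exact (Ψ 1 x).map_eq_zero_iff.mp h2
  set f : X → G → H := fun x g => ρ g (act g⁻¹ x) with hf
  have hRK : ∀ z : X, ∀ t ∈ Set.range (f z), ‖t‖ ≤ 2 * C := by
    rintro z t ⟨g, rfl⟩
    exact hbnd g _
  have hOne : ∀ x : X, (Set.range (f x)).Nonempty := fun x => Set.range_nonempty _
  have hkey : ∀ (h g : G) (x : X), f (act h x) (h * g) = ρ h x + Ψ h x (f x g) := by
    intro h g x
    have e1 : act (h * g)⁻¹ (act h x) = act g⁻¹ x := by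
      rw [← hact_mul, show (h * g)⁻¹ * h = g⁻¹ by group]
    have e2 : act g (act g⁻¹ x) = x := by
      rw [← hact_mul]
      simp [hact_one]
    simp only [hf]
    rw [e1, hρ_coc h g (act g⁻¹ x), e2]
  have hOeq : ∀ (h : G) (x : X),
      Set.range (f (act h x)) = (fun v => ρ h x + Ψ h x v) '' Set.range (f x) := by
    intro h x
    ext v
    constructor
    · rintro ⟨g, rfl⟩
      refine ⟨f x (h⁻¹ * g), ⟨h⁻¹ * g, rfl⟩, ?_⟩
      show ρ h x + Ψ h x (f x (h⁻¹ * g)) = f (act h x) g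
      rw [← hkey h (h⁻¹ * g) x, mul_inv_cancel_left]
    · rintro ⟨w, ⟨g, rfl⟩, rfl⟩
      exact ⟨h * g, hkey h g x⟩
  have hex : ∀ x : X, ∃ c, IsCirc (Set.range (f x)) c :=
    fun x => exists_isCirc (hOne x) (hRK x)
  choose φ' hφ'c using hex
  have hAiso : ∀ (h : G) (x : X) (a b : H),
      dist (ρ h x + Ψ h x a) (ρ h x + Ψ h x b) = dist a b := by
    intro h x a b
    rw [dist_add_left, (Ψ h x).dist_map]
  have hAsurj : ∀ (h : G) (x : X), Function.Surjective (fun v => ρ h x + Ψ h x v) := by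
    intro h x w
    exact ⟨(Ψ h x).symm (w - ρ h x), by simp⟩
  have hequiv : ∀ (h : G) (x : X), φ' (act h x) = ρ h x + Ψ h x (φ' x) := by
    intro h x
    have h1 : IsCirc (Set.range (f (act h x))) (ρ h x + Ψ h x (φ' x)) := by
      rw [hOeq h x]
      exact isCirc_image (A := fun v => ρ h x + Ψ h x v) (hAiso h x) (hAsurj h x)
        (hOne x) (hRK x) (hφ'c x)
    exact isCirc_unique (hOne _) (hRK _) (hφ'c (act h x)) h1
  have hrad0 : ∀ x, 0 ≤ sRad (Set.range (f x)) (φ' x) :=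
    fun x => sRad_nonneg (hOne x) (hRK x) _
  have hradinv : ∀ (h : G) (x : X),
      sRad (Set.range (f (act h x))) (φ' (act h x)) = sRad (Set.range (f x)) (φ' x) := by
    intro h x
    rw [hequiv h x, hOeq h x]
    exact sRad_image (A := fun v => ρ h x + Ψ h x v) (hAiso h x) (hOne x) (hRK x) _
  have hfapprox : ∀ (x : X) (ε : ℝ), 0 < ε → ∃ F : Finset G, F.Nonempty ∧
      ∀ c₀, IsCirc (f x '' ↑F) c₀ →
        sRad (Set.range (f x)) (φ' x) - ε < sRad (f x '' ↑F) c₀ :=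
    fun x ε hε => exists_finset_isCirc (f x) (fun g => hbnd g _) (hφ'c x) hε
  have hfc : ∀ g : G, Continuous fun z => f z g := by
    intro g
    simp only [hf]
    exact (hρ_cont g).comp (hact_cont g⁻¹)
  have hfin_cont : ∀ (F : Finset G) (x : X) (η : ℝ), 0 < η →
      ∃ δ > 0, ∀ z, dist z x < δ → ∀ g ∈ F, dist (f z g) (f x g) ≤ η := by
    intro F x η hη
    induction F using Finset.induction_on with
    | empty => exact ⟨1, one_pos, fun z _ g hg => absurd hg (Finset.notMem_empty g)⟩
    | @insert g₀ F' hg₀ ih =>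
      obtain ⟨δ₁, hδ₁, h₁⟩ := ih
      obtain ⟨δ₂, hδ₂, h₂⟩ := Metric.continuous_iff.mp (hfc g₀) x η hη
      refine ⟨min δ₁ δ₂, lt_min hδ₁ hδ₂, fun z hz g hg => ?_⟩
      rcases Finset.mem_insert.mp hg with rfl | hg'
      · exact (h₂ z (lt_of_lt_of_le hz (min_le_right _ _))).le
      · exact h₁ z (lt_of_lt_of_le hz (min_le_left _ _)) g hg'
  have hFsub : ∀ (z : X) (F : Finset G), f z '' ↑F ⊆ Set.range (f z) :=
    fun z F => Set.image_subset_range _ _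
  have hFK : ∀ (z : X) (F : Finset G), ∀ v ∈ f z '' ↑F, ‖v‖ ≤ 2 * C := by
    rintro z F v ⟨g, _, rfl⟩
    exact hbnd g _
  have hFne : ∀ (z : X) {F : Finset G}, F.Nonempty → (f z '' ↑F).Nonempty :=
    fun z {F} hF => (Finset.coe_nonempty.mpr hF).image _
  have hexF : ∀ (z : X) (F : Finset G), F.Nonempty → ∃ c, IsCirc (f z '' ↑F) c :=
    fun z F hF => exists_isCirc (hFne z hF) (hFK z F)
  -- constancy of the radius
  have hconst_le : ∀ x y : X,
      sRad (Set.range (f x)) (φ' x) ≤ sRad (Set.range (f y)) (φ' y) := by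
    intro x y
    refine le_of_forall_pos_le_add fun ε hε => ?_
    obtain ⟨F, hFne', hFprop⟩ := hfapprox x (ε/2) (by linarith)
    obtain ⟨cx, hcx⟩ := hexF x F hFne'
    have hax : sRad (Set.range (f x)) (φ' x) - ε/2 < sRad (f x '' ↑F) cx := hFprop cx hcx
    obtain ⟨δ, hδ, hδp⟩ := hfin_cont F x (ε/4) (by linarith)
    obtain ⟨z, hzb, hzr⟩ := Metric.dense_iff.mp (hmin y) x δ hδ
    obtain ⟨g₀, hg₀⟩ := hzr
    obtain ⟨cz, hcz⟩ := hexF z F hFne'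
    have hzdist : dist z x < δ := Metric.mem_ball.mp hzb
    have hnear : ∀ s ∈ f x '' ↑F, ∃ t ∈ f z '' ↑F, dist s t ≤ ε/4 := by
      rintro s ⟨g, hg, rfl⟩
      exact ⟨f z g, ⟨g, hg, rfl⟩, by rw [dist_comm]; exact hδp z hzdist g hg⟩
    have h1 : sRad (f x '' ↑F) cx ≤ sRad (f x '' ↑F) cz := hcx cz
    have h2 : sRad (f x '' ↑F) cz ≤ sRad (f z '' ↑F) cz + ε/4 :=
      sRad_le_near (hFne x hFne') (hFK z F) hnear cz
    have h3 : sRad (f z '' ↑F) cz ≤ sRad (f z '' ↑F) (φ' z) := hcz (φ' z)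
    have h4 : sRad (f z '' ↑F) (φ' z) ≤ sRad (Set.range (f z)) (φ' z) :=
      sRad_mono (hFne z hFne') (hFsub z F) (hRK z) _
    have h5 : sRad (Set.range (f z)) (φ' z) = sRad (Set.range (f y)) (φ' y) := by
      rw [← hg₀]
      exact hradinv g₀ y
    linarith
  have hconst : ∀ x y : X,
      sRad (Set.range (f x)) (φ' x) = sRad (Set.range (f y)) (φ' y) :=
    fun x y => le_antisymm (hconst_le x y) (hconst_le y x)
  -- continuity of φ'
  have hcont : Continuous φ' := by
    rw [Metric.continuous_iff]
    intro x ε hε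
    obtain ⟨r, hrdef⟩ : ∃ r : ℝ, sRad (Set.range (f x)) (φ' x) = r := ⟨_, rfl⟩
    have hr0 : 0 ≤ r := hrdef ▸ hrad0 x
    obtain ⟨M, hMdef⟩ : ∃ M : ℝ, r + 1 = M := ⟨_, rfl⟩
    have hM1 : (1:ℝ) ≤ M := by linarith
    have hM0 : (0:ℝ) < M := by linarith
    obtain ⟨η, hηdef⟩ : ∃ η : ℝ, min 1 (ε^2 / (100 * M)) = η := ⟨_, rfl⟩
    have hη0 : 0 < η := hηdef ▸ lt_min one_pos (div_pos (by positivity) (by linarith))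
    have hη1 : η ≤ 1 := hηdef ▸ min_le_left _ _
    have hηε : η ≤ ε^2 / (100 * M) := hηdef ▸ min_le_right _ _
    have hηM : η * M ≤ ε^2 / 100 := by
      have h1 := mul_le_mul_of_nonneg_right hηε hM0.le
      have h2 : ε^2 / (100 * M) * M = ε^2 / 100 := by
        field_simp
      linarith
    have h8 : 8 * η * M < ε^2 / 9 := by
      have hε2 : 0 < ε^2 := by positivity
      nlinarith [hηM]
    obtain ⟨F, hFne', hFprop⟩ := hfapprox x η hη0
    obtain ⟨cx, hcx⟩ := hexF x F hFne'
    obtain ⟨a, hadef⟩ : ∃ a : ℝ, sRad (f x '' ↑F) cx = a := ⟨_, rfl⟩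
    have hax1 : r - η < a := by
      have h0 := hFprop cx hcx
      rwa [hrdef, hadef] at h0
    have hax2 : a ≤ r := by
      have h1 : sRad (f x '' ↑F) cx ≤ sRad (f x '' ↑F) (φ' x) := hcx _
      have h2 : sRad (f x '' ↑F) (φ' x) ≤ sRad (Set.range (f x)) (φ' x) :=
        sRad_mono (hFne x hFne') (hFsub x F) (hRK x) _
      rw [hrdef] at h2
      rw [hadef] at h1
      linarith
    have ha0 : 0 ≤ a := by
      have h0 := sRad_nonneg (hFne x hFne') (hFK x F) cx
      rwa [hadef] at h0
    obtain ⟨δ, hδ, hδp⟩ := hfin_cont F x η hη0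
    refine ⟨δ, hδ, fun z hz => ?_⟩
    obtain ⟨cz, hcz⟩ := hexF z F hFne'
    obtain ⟨b, hbdef⟩ : ∃ b : ℝ, sRad (f z '' ↑F) cz = b := ⟨_, rfl⟩
    have hb0 : 0 ≤ b := by
      have h0 := sRad_nonneg (hFne z hFne') (hFK z F) cz
      rwa [hbdef] at h0
    have hnear1 : ∀ s ∈ f x '' ↑F, ∃ t ∈ f z '' ↑F, dist s t ≤ η := by
      rintro s ⟨g, hg, rfl⟩
      exact ⟨f z g, ⟨g, hg, rfl⟩, by rw [dist_comm]; exact hδp z hz g hg⟩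
    have hnear2 : ∀ s ∈ f z '' ↑F, ∃ t ∈ f x '' ↑F, dist s t ≤ η := by
      rintro s ⟨g, hg, rfl⟩
      exact ⟨f x g, ⟨g, hg, rfl⟩, hδp z hz g hg⟩
    have hba : a ≤ b + η := by
      have h1 : sRad (f x '' ↑F) cx ≤ sRad (f x '' ↑F) cz := hcx cz
      have h2 : sRad (f x '' ↑F) cz ≤ sRad (f z '' ↑F) cz + η :=
        sRad_le_near (hFne x hFne') (hFK z F) hnear1 cz
      rw [hadef] at h1
      rw [hbdef] at h2
      linarith
    have hradz : sRad (Set.range (f z)) (φ' z) = r := by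
      rw [← hrdef]
      exact hconst z x
    have hbr : b ≤ r := by
      have h3 : sRad (f z '' ↑F) cz ≤ sRad (f z '' ↑F) (φ' z) := hcz (φ' z)
      have h4 : sRad (f z '' ↑F) (φ' z) ≤ sRad (Set.range (f z)) (φ' z) :=
        sRad_mono (hFne z hFne') (hFsub z F) (hRK z) _
      rw [hradz] at h4
      rw [hbdef] at h3
      linarith
    -- (i)
    have hi : dist cx (φ' x) ^ 2 ≤ 8 * η * M := by
      have h1 := isCirc_le_sq (hFne x hFne') (hFK x F) hcx (φ' x)
      rw [hadef] at h1
      obtain ⟨S, hS⟩ : ∃ S : ℝ, sRad (f x '' ↑F) (φ' x) = S := ⟨_, rfl⟩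
      rw [hS] at h1
      have h2 : S ≤ r := by
        have h0 := sRad_mono (hFne x hFne') (hFsub x F) (hRK x) (φ' x)
        rwa [hrdef, hS] at h0
      have h2' : 0 ≤ S := by
        have h0 := sRad_nonneg (hFne x hFne') (hFK x F) (φ' x)
        rwa [hS] at h0
      have hprod : (r - a) * (r + a) ≤ (2*η) * (2*M) :=
        mul_le_mul (by linarith) (by linarith) (by linarith) (by linarith)
      nlinarith [hprod]
    -- (ii)
    have hii : dist cz cx ^ 2 ≤ 8 * η * M := by
      have h1 := isCirc_le_sq (hFne z hFne') (hFK z F) hcz cx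
      rw [hbdef] at h1
      obtain ⟨S, hS⟩ : ∃ S : ℝ, sRad (f z '' ↑F) cx = S := ⟨_, rfl⟩
      rw [hS] at h1
      have h2 : S ≤ a + η := by
        have h0 := sRad_le_near (hFne z hFne') (hFK x F) hnear2 cx
        rwa [hS, hadef] at h0
      have h2' : 0 ≤ S := by
        have h0 := sRad_nonneg (hFne z hFne') (hFK z F) cx
        rwa [hS] at h0
      have hprod : (a + η - b) * (a + η + b) ≤ (2*η) * (2*M) :=
        mul_le_mul (by linarith) (by linarith) (by linarith) (by linarith)
      nlinarith [hprod]
    -- (iii)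
    have hiii : dist cz (φ' z) ^ 2 ≤ 8 * η * M := by
      have h1 := isCirc_le_sq (hFne z hFne') (hFK z F) hcz (φ' z)
      rw [hbdef] at h1
      obtain ⟨S, hS⟩ : ∃ S : ℝ, sRad (f z '' ↑F) (φ' z) = S := ⟨_, rfl⟩
      rw [hS] at h1
      have h2 : S ≤ r := by
        have h0 := sRad_mono (hFne z hFne') (hFsub z F) (hRK z) (φ' z)
        rw [hradz] at h0
        rwa [hS] at h0
      have h2' : 0 ≤ S := by
        have h0 := sRad_nonneg (hFne z hFne') (hFK z F) (φ' z)
        rwa [hS] at h0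
      have hprod : (r - b) * (r + b) ≤ (2*η) * (2*M) :=
        mul_le_mul (by linarith) (by linarith) (by linarith) (by linarith)
      nlinarith [hprod]
    have hsq : ∀ t : ℝ, 0 ≤ t → t^2 < (ε/3)^2 → t < ε/3 := by
      intro t ht h
      nlinarith
    have hε39 : (ε/3)^2 = ε^2/9 := by ring
    have e1 : dist cx (φ' x) < ε/3 := hsq _ dist_nonneg (by rw [hε39]; linarith)
    have e2 : dist cz cx < ε/3 := hsq _ dist_nonneg (by rw [hε39]; linarith)
    have e3 : dist cz (φ' z) < ε/3 := hsq _ dist_nonneg (by rw [hε39]; linarith)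
    calc dist (φ' z) (φ' x) ≤ dist (φ' z) cz + dist cz (φ' x) := dist_triangle _ _ _
    _ ≤ dist (φ' z) cz + (dist cz cx + dist cx (φ' x)) := by
        linarith [dist_triangle cz cx (φ' x)]
    _ = dist cz (φ' z) + dist cz cx + dist cx (φ' x) := by rw [dist_comm (φ' z) cz]; ring
    _ < ε/3 + ε/3 + ε/3 := by linarith
    _ = ε := by ring
  refine ⟨φ', hcont, fun g x => ?_⟩
  rw [hequiv g x]
  abel
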